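/- Let A = [[A_ff, A_fc],[A_cf, A_cc]] with A_ff invertible, let W = −A_ff⁻¹·A_fc (ideal interpolation), let P = [[W],[I]] and R = [Z, I] for any C×F matrix Z, and assume K = R·A·P is invertible. Then for every vector e = (e_f, e_c) satisfying A_ff·e_f + A_fc·e_c = 0 (i.e., with zero residual at F-points), one has (I − P·K⁻¹·R·A)·e = 0. Hence an exact solve on F-points followed by coarse-grid correction with P_ideal is an exact two-level solver, independent of Z. -/

import Mathlib

open Matrix

/-- **Ideal interpolation (Corollary 2.2).** If `W = −A_ff⁻¹·A_fc`, then for every error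
vector `e = (e_f, e_c)` with zero residual at F-points (`A_ff·e_f + A_fc·e_c = 0`),
coarse-grid correction annihilates the error: `(I − P·K⁻¹·R·A)·e = 0`,
independent of the restriction block `Z`. -/
theorem ideal_interpolation_exact_two_level
    {F C : Type*} [Fintype F] [Fintype C] [DecidableEq F] [DecidableEq C]
    (Aff : Matrix F F ℝ) (Afc : Matrix F C ℝ) (Acf : Matrix C F ℝ) (Acc : Matrix C C ℝ)
    (hAff : IsUnit Aff)
    (W : Matrix F C ℝ) (hW : W = -(Aff⁻¹ * Afc)) (Z : Matrix C F ℝ)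
    (A : Matrix (F ⊕ C) (F ⊕ C) ℝ) (hA : A = fromBlocks Aff Afc Acf Acc)
    (P : Matrix (F ⊕ C) C ℝ) (hP : P = fromRows W 1)
    (R : Matrix C (F ⊕ C) ℝ) (hR : R = fromCols Z 1)
    (K : Matrix C C ℝ) (hK : K = R * A * P) (hKinv : IsUnit K) :
    ∀ e : (F ⊕ C) → ℝ,
      Aff *ᵥ (fun i => e (Sum.inl i)) + Afc *ᵥ (fun j => e (Sum.inr j)) = 0 →
      (1 - P * K⁻¹ * R * A) *ᵥ e = 0 := by
  intro e he
  have hAffdet : IsUnit Aff.det := (Matrix.isUnit_iff_isUnit_det Aff).mp hAff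
  set ef : F → ℝ := fun i => e (Sum.inl i) with hef
  set ec : C → ℝ := fun j => e (Sum.inr j) with hec
  -- e_f = W e_c
  have h1 : Aff *ᵥ ef = -(Afc *ᵥ ec) := by
    rw [eq_neg_iff_add_eq_zero]; exact he
  have h2 : ef = W *ᵥ ec := by
    have h1' : Aff⁻¹ *ᵥ (Aff *ᵥ ef) = Aff⁻¹ *ᵥ (-(Afc *ᵥ ec)) := by rw [h1]
    rw [Matrix.mulVec_mulVec, Matrix.nonsing_inv_mul Aff hAffdet, Matrix.one_mulVec,
      Matrix.mulVec_neg, Matrix.mulVec_mulVec] at h1'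
    rw [h1', hW, Matrix.neg_mulVec]
  -- e = P *ᵥ ec
  have h3 : e = P *ᵥ ec := by
    funext i
    cases i with
    | inl i =>
      have : (P *ᵥ ec) (Sum.inl i) = (W *ᵥ ec) i := by
        rw [hP]; simp [Matrix.mulVec, dotProduct]
      rw [this, ← h2]
    | inr j =>
      have : (P *ᵥ ec) (Sum.inr j) = ((1 : Matrix C C ℝ) *ᵥ ec) j := by
        rw [hP]; simp [Matrix.mulVec, dotProduct]
      rw [this, Matrix.one_mulVec]
  have hKdet : IsUnit K.det := (Matrix.isUnit_iff_isUnit_det K).mp hKinv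
  have h4 : (1 - P * K⁻¹ * R * A) * P = 0 := by
    have : P * K⁻¹ * R * A * P = P := by
      rw [Matrix.mul_assoc, Matrix.mul_assoc, ← Matrix.mul_assoc R A P, ← hK, Matrix.mul_assoc,
        Matrix.nonsing_inv_mul K hKdet, Matrix.mul_one]
    rw [Matrix.sub_mul, Matrix.one_mul, this, sub_self]
  rw [h3, Matrix.mulVec_mulVec, h4, Matrix.zero_mulVec]
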